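/- Let B be a bicategory with pseudo pullbacks of cospans in W, where W satisfies [WB1]–[WB5], is pullback closed, and consists of co-fully-faithful arrows. Then every 2-cell of B(W⁻¹) has a representative whose left-hand 2-cell is the chosen pseudo pullback, and this representative is unique: two 2-cell diagrams with the same pseudo-pullback left-hand cell represent the same 2-cell of B(W⁻¹) if and only if their right-hand 2-cells are equal. -/

import Mathlib

open CategoryTheory Bicategory

universe w v u

/-- A class of 1-morphisms in a bicategory. -/
def WClass (B : Type u) [Bicategory.{w, v} B] :=
  ∀ ⦃a b : B⦄, (a ⟶ b) → Prop

namespace WClass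

variable {B : Type u} [Bicategory.{w, v} B]

/-- [WB1]: all identities are in `W`. -/
def WB1 (W : WClass B) : Prop := ∀ a : B, W (𝟙 a)

/-- [WB2]: for composable arrows of `W` there is a pre-composition landing in `W`. -/
def WB2 (W : WClass B) : Prop :=
  ∀ ⦃a b c : B⦄ (vm : a ⟶ b) (wm : b ⟶ c), W vm → W wm →
    ∃ (a' : B) (u : a' ⟶ a), W (u ≫ vm ≫ wm)

/-- [WB3]: squares with invertible fillers over cospans with one leg in `W`. -/
def WB3 (W : WClass B) : Prop :=
  ∀ ⦃a b c : B⦄ (wm : a ⟶ b) (f : c ⟶ b), W wm →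
    ∃ (d : B) (h : d ⟶ a) (vm : d ⟶ c), W vm ∧ Nonempty (h ≫ wm ≅ vm ≫ f)

/-- `β` is a lifting of the 2-cell `η : f ≫ wm ⟶ g ≫ wm` along `wm`, via `u`. -/
def IsLift ⦃a b c : B⦄ (f g : a ⟶ b) (wm : b ⟶ c) (η : f ≫ wm ⟶ g ≫ wm)
    ⦃a' : B⦄ (u : a' ⟶ a) (β : u ≫ f ⟶ u ≫ g) : Prop :=
  β ▷ wm = (α_ u f wm).hom ≫ u ◁ η ≫ (α_ u g wm).inv

/-- [WB4]: existence of liftings of 2-cells along arrows of `W`, together with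
the compatibility of any two such liftings. -/
def WB4 (W : WClass B) : Prop :=
  (∀ ⦃a b c : B⦄ (f g : a ⟶ b) (wm : b ⟶ c), W wm → ∀ η : f ≫ wm ⟶ g ≫ wm,
    ∃ (a' : B) (u : a' ⟶ a), W u ∧ ∃ β : u ≫ f ⟶ u ≫ g, IsLift f g wm η u β) ∧
  (∀ ⦃a b c : B⦄ (f g : a ⟶ b) (wm : b ⟶ c), W wm → ∀ η : f ≫ wm ⟶ g ≫ wm,
    ∀ ⦃a₁ : B⦄ (u₁ : a₁ ⟶ a) (β₁ : u₁ ≫ f ⟶ u₁ ≫ g), W u₁ → IsLift f g wm η u₁ β₁ →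
      ∀ ⦃a₂ : B⦄ (u₂ : a₂ ⟶ a) (β₂ : u₂ ≫ f ⟶ u₂ ≫ g), W u₂ → IsLift f g wm η u₂ β₂ →
        ∃ (d : B) (s : d ⟶ a₁) (t : d ⟶ a₂), W (s ≫ u₁) ∧ W (t ≫ u₂) ∧
          ∃ ε₀ : s ≫ u₁ ≅ t ≫ u₂,
            ((α_ s u₁ f).hom ≫ s ◁ β₁ ≫ (α_ s u₁ g).inv) ≫ ε₀.hom ▷ g =
              ε₀.hom ▷ f ≫ (α_ t u₂ f).hom ≫ t ◁ β₂ ≫ (α_ t u₂ g).inv)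

/-- [WB5]: `W` is closed under invertible 2-cells. -/
def WB5 (W : WClass B) : Prop :=
  ∀ ⦃a b : B⦄ (vm wm : a ⟶ b), W wm → Nonempty (vm ≅ wm) → W vm

end WClass

/-- A 1-morphism `wm` is co-fully-faithful if every 2-cell `wm ≫ f ⟶ wm ≫ g`
factors uniquely through right whiskering by `wm`. -/
def CoFF {B : Type u} [Bicategory.{w, v} B] ⦃a b : B⦄ (wm : a ⟶ b) : Prop :=
  ∀ ⦃c : B⦄ (f g : b ⟶ c) (η : wm ≫ f ⟶ wm ≫ g), ∃! η' : f ⟶ g, wm ◁ η' = η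

/-- A 1-morphism `wm` is co-full if every 2-cell `wm ≫ f ⟶ wm ≫ g`
factors (not necessarily uniquely) through right whiskering by `wm`. -/
def CoFull {B : Type u} [Bicategory.{w, v} B] ⦃a b : B⦄ (wm : a ⟶ b) : Prop :=
  ∀ ⦃c : B⦄ (f g : b ⟶ c) (η : wm ≫ f ⟶ wm ≫ g), ∃ η' : f ⟶ g, wm ◁ η' = η

/-- Equivalence of 2-cell diagrams between the spans `(u₁, f₁)` and `(u₂, f₂)` in the
construction of the bicategory of fractions: the diagram `(v₁, v₂, αc, β)` is equivalent
to the diagram `(v₁', v₂', αc', β')` when there is a common refinement `s, t` with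
invertible comparison 2-cells `ε₁, ε₂`, the relevant composite in `W`, satisfying the
two pasting equations. -/
def DiagEquiv {B : Type u} [Bicategory.{w, v} B] (W : WClass B)
    {a b c₁ c₂ : B} (u₁ : c₁ ⟶ a) (f₁ : c₁ ⟶ b) (u₂ : c₂ ⟶ a) (f₂ : c₂ ⟶ b)
    {d : B} (v₁ : d ⟶ c₁) (v₂ : d ⟶ c₂)
    (αc : v₁ ≫ u₁ ≅ v₂ ≫ u₂) (β : v₁ ≫ f₁ ⟶ v₂ ≫ f₂)
    {d' : B} (v₁' : d' ⟶ c₁) (v₂' : d' ⟶ c₂)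
    (αc' : v₁' ≫ u₁ ≅ v₂' ≫ u₂) (β' : v₁' ≫ f₁ ⟶ v₂' ≫ f₂) : Prop :=
  ∃ (e : B) (s : e ⟶ d) (t : e ⟶ d'),
    W ((s ≫ v₁) ≫ u₁) ∧
    ∃ (ε₁ : s ≫ v₁ ≅ t ≫ v₁') (ε₂ : s ≫ v₂ ≅ t ≫ v₂'),
      (ε₁.hom ▷ u₁ ≫ (α_ t v₁' u₁).hom ≫ t ◁ αc'.hom ≫ (α_ t v₂' u₂).inv =
        (α_ s v₁ u₁).hom ≫ s ◁ αc.hom ≫ (α_ s v₂ u₂).inv ≫ ε₂.hom ▷ u₂) ∧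
      (ε₁.hom ▷ f₁ ≫ (α_ t v₁' f₁).hom ≫ t ◁ β' ≫ (α_ t v₂' f₂).inv =
        (α_ s v₁ f₁).hom ≫ s ◁ β ≫ (α_ s v₂ f₂).inv ≫ ε₂.hom ▷ f₂)

/-- Data of a pseudo pullback of a cospan `u : a ⟶ c ⟵ b : vm` in a bicategory:
an apex with projections, an invertible filler 2-cell, and a lifting universal
property compatible with the fillers. -/
structure PseudoPullbackData {B : Type u} [Bicategory.{w, v} B] {a b c : B}
    (u : a ⟶ c) (vm : b ⟶ c) where
  pt : B
  fst : pt ⟶ a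
  snd : pt ⟶ b
  iso : fst ≫ u ≅ snd ≫ vm
  lift : ∀ {x : B} (p : x ⟶ a) (q : x ⟶ b), (p ≫ u ≅ q ≫ vm) → (x ⟶ pt)
  liftFst : ∀ {x : B} (p : x ⟶ a) (q : x ⟶ b) (e : p ≫ u ≅ q ≫ vm),
    lift p q e ≫ fst ≅ p
  liftSnd : ∀ {x : B} (p : x ⟶ a) (q : x ⟶ b) (e : p ≫ u ≅ q ≫ vm),
    lift p q e ≫ snd ≅ q
  lift_w : ∀ {x : B} (p : x ⟶ a) (q : x ⟶ b) (e : p ≫ u ≅ q ≫ vm),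
    (α_ (lift p q e) fst u).hom ≫ lift p q e ◁ iso.hom ≫
        (α_ (lift p q e) snd vm).inv ≫ (liftSnd p q e).hom ▷ vm =
      (liftFst p q e).hom ▷ u ≫ e.hom


namespace Statement18Helpers

open WClass

variable {B : Type u} [Bicategory.{w, v} B] {W : WClass B}


/-- Bicategorical composites of isomorphisms are isomorphisms. -/
instance isIso_bicategoricalComp {a b : B} {f g h i : a ⟶ b} [BicategoricalCoherence g h]
    (x : f ⟶ g) (y : h ⟶ i) [IsIso x] [IsIso y] : IsIso (x ⊗≫ y) := by
  unfold bicategoricalComp; infer_instance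

/-- Injectivity of left whiskering by an arrow of `W`. -/
lemma wl_cancel (hcoff : ∀ ⦃x y : B⦄ (f : x ⟶ y), W f → CoFF f)
    {x y z : B} {u : x ⟶ y} (hu : W u) {F G : y ⟶ z} {a b : F ⟶ G}
    (h : u ◁ a = u ◁ b) : a = b := by
  obtain ⟨c, -, hc⟩ := hcoff u hu F G (u ◁ b)
  exact (hc a h).trans (hc b rfl).symm

/-- Local faithfulness of right whiskering by an arrow of `W`. -/
lemma cancel_right (h1 : W.WB1) (h4 : W.WB4) (h5 : W.WB5)
    {x y z : B} {F G : x ⟶ y} (wm : y ⟶ z) (hw : W wm) (Ψ Ψ' : F ⟶ G)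
    (h : Ψ ▷ wm = Ψ' ▷ wm) :
    ∃ (E : B) (u : E ⟶ x), W u ∧ u ◁ Ψ = u ◁ Ψ' := by
  have l1 : WClass.IsLift F G wm (Ψ ▷ wm) (𝟙 x) ((λ_ F).hom ≫ Ψ ≫ (λ_ G).inv) := by
    unfold WClass.IsLift; bicategory
  have l2 : WClass.IsLift F G wm (Ψ ▷ wm) (𝟙 x) ((λ_ F).hom ≫ Ψ' ≫ (λ_ G).inv) := by
    unfold WClass.IsLift; rw [h]; bicategory
  obtain ⟨D, s, t, hs, ht, ε₀, EQ⟩ :=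
    h4.2 F G wm hw (Ψ ▷ wm) (𝟙 x) _ (h1 x) l1 (𝟙 x) _ (h1 x) l2
  have EQ' : s ◁ Ψ ≫ ((ρ_ s).inv ≫ ε₀.hom ≫ (ρ_ t).hom) ▷ G =
      ((ρ_ s).inv ≫ ε₀.hom ≫ (ρ_ t).hom) ▷ F ≫ t ◁ Ψ' := by
    have e1 : s ◁ Ψ ≫ ((ρ_ s).inv ≫ ε₀.hom ≫ (ρ_ t).hom) ▷ G =
        (ρ_ s).inv ▷ F ≫
        ((((α_ s (𝟙 x) F).hom ≫ s ◁ ((λ_ F).hom ≫ Ψ ≫ (λ_ G).inv) ≫ (α_ s (𝟙 x) G).inv) ≫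
          ε₀.hom ▷ G) ≫ (ρ_ t).hom ▷ G) := by
      bicategory
    have e2 : (ρ_ s).inv ▷ F ≫
        ((ε₀.hom ▷ F ≫
          (α_ t (𝟙 x) F).hom ≫ t ◁ ((λ_ F).hom ≫ Ψ' ≫ (λ_ G).inv) ≫ (α_ t (𝟙 x) G).inv) ≫
          (ρ_ t).hom ▷ G) = ((ρ_ s).inv ≫ ε₀.hom ≫ (ρ_ t).hom) ▷ F ≫ t ◁ Ψ' := by
      bicategory
    rw [e1, ← e2, EQ]
  have EX : ((ρ_ s).inv ≫ ε₀.hom ≫ (ρ_ t).hom) ▷ F ≫ t ◁ Ψ' =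
      s ◁ Ψ' ≫ ((ρ_ s).inv ≫ ε₀.hom ≫ (ρ_ t).hom) ▷ G :=
    (whisker_exchange _ Ψ').symm
  rw [EX] at EQ'
  refine ⟨D, s, h5 s (s ≫ 𝟙 x) hs ⟨(ρ_ s).symm⟩, ?_⟩
  have hiso : IsIso (((ρ_ s).inv ≫ ε₀.hom ≫ (ρ_ t).hom) ▷ G) := by
    have : IsIso ((ρ_ s).inv ≫ ε₀.hom ≫ (ρ_ t).hom) := inferInstance
    infer_instance
  exact (cancel_mono (((ρ_ s).inv ≫ ε₀.hom ≫ (ρ_ t).hom) ▷ G)).mp EQ'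

/-- Invertible liftings of invertible 2-cells along arrows of `W`,
via a cover in `W`. -/
lemma inv_lift (h1 : W.WB1) (h2 : W.WB2) (h4 : W.WB4) (h5 : W.WB5)
    (pb : ∀ {x y z : B} (u : x ⟶ z) (vm : y ⟶ z), W u → W vm → PseudoPullbackData u vm)
    (hpbc : ∀ {x y z : B} (u : x ⟶ z) (vm : y ⟶ z) (hu : W u) (hv : W vm),
      W ((pb u vm hu hv).fst ≫ u))
    {x y z : B} (F G : x ⟶ y) (wm : y ⟶ z) (hw : W wm) (η : F ≫ wm ≅ G ≫ wm) :
    ∃ (E : B) (u : E ⟶ x), W u ∧ ∃ θ : u ≫ F ≅ u ≫ G,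
      θ.hom ▷ wm = (α_ u F wm).hom ≫ u ◁ η.hom ≫ (α_ u G wm).inv := by
  obtain ⟨E₁, z₁, hz₁, θ₁, L₁⟩ := h4.1 F G wm hw η.hom
  obtain ⟨E₂, z₂, hz₂, θ₂, L₂⟩ :=
    h4.1 (z₁ ≫ G) (z₁ ≫ F) wm hw ((α_ z₁ G wm).hom ≫ z₁ ◁ η.inv ≫ (α_ z₁ F wm).inv)
  have CΦ : (z₂ ◁ θ₁ ≫ θ₂) ▷ wm = 𝟙 (z₂ ≫ (z₁ ≫ F)) ▷ wm := by
    rw [comp_whiskerRight, whisker_assoc, L₁, L₂]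
    simp only [Bicategory.whiskerLeft_comp, Category.assoc, Iso.inv_hom_id_assoc]
    rw [whiskerLeft_inv_hom_assoc]
    have hcan : z₂ ◁ z₁ ◁ η.hom ≫ z₂ ◁ z₁ ◁ η.inv ≫ z₂ ◁ (α_ z₁ F wm).inv ≫
        (α_ z₂ (z₁ ≫ F) wm).inv =
        z₂ ◁ (α_ z₁ F wm).inv ≫ (α_ z₂ (z₁ ≫ F) wm).inv := by
      rw [← Bicategory.whiskerLeft_comp_assoc, ← Bicategory.whiskerLeft_comp,
        Iso.hom_inv_id]
      simp
    rw [hcan]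
    bicategory
  have CΦ' : (θ₂ ≫ z₂ ◁ θ₁) ▷ wm = 𝟙 (z₂ ≫ (z₁ ≫ G)) ▷ wm := by
    rw [comp_whiskerRight, whisker_assoc, L₁, L₂]
    simp only [Bicategory.whiskerLeft_comp, Category.assoc, Iso.inv_hom_id_assoc]
    rw [whiskerLeft_inv_hom_assoc]
    have hcan : z₂ ◁ z₁ ◁ η.inv ≫ z₂ ◁ z₁ ◁ η.hom ≫ z₂ ◁ (α_ z₁ G wm).inv ≫
        (α_ z₂ (z₁ ≫ G) wm).inv =
        z₂ ◁ (α_ z₁ G wm).inv ≫ (α_ z₂ (z₁ ≫ G) wm).inv := by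
      rw [← Bicategory.whiskerLeft_comp_assoc, ← Bicategory.whiskerLeft_comp,
        Iso.inv_hom_id]
      simp
    rw [hcan]
    bicategory
  obtain ⟨D₁, s₁, hs₁, e₁⟩ := cancel_right h1 h4 h5 wm hw _ _ CΦ
  obtain ⟨D₂, s₂, hs₂, e₂⟩ := cancel_right h1 h4 h5 wm hw _ _ CΦ'
  obtain ⟨π₁, π₂, ι, hc⟩ :
      ∃ (π₁ : (pb s₁ s₂ hs₁ hs₂).pt ⟶ D₁) (π₂ : (pb s₁ s₂ hs₁ hs₂).pt ⟶ D₂)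
        (ι : π₁ ≫ s₁ ≅ π₂ ≫ s₂), W (π₁ ≫ s₁) :=
    ⟨(pb s₁ s₂ hs₁ hs₂).fst, (pb s₁ s₂ hs₁ hs₂).snd, (pb s₁ s₂ hs₁ hs₂).iso,
      hpbc s₁ s₂ hs₁ hs₂⟩
  have f₁ : (π₁ ≫ s₁) ◁ (z₂ ◁ θ₁ ≫ θ₂) = 𝟙 _ := by
    rw [Bicategory.comp_whiskerLeft, e₁]; simp
  have f₂ : (π₁ ≫ s₁) ◁ (θ₂ ≫ z₂ ◁ θ₁) = 𝟙 _ := by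
    have g₂ : (π₂ ≫ s₂) ◁ (θ₂ ≫ z₂ ◁ θ₁) = 𝟙 _ := by
      rw [Bicategory.comp_whiskerLeft, e₂]; simp
    have ex := whisker_exchange ι.hom (θ₂ ≫ z₂ ◁ θ₁)
    rw [g₂, Category.comp_id] at ex
    have hiso : IsIso (ι.hom ▷ (z₂ ≫ z₁ ≫ G)) := by
      have : IsIso ι.hom := inferInstance
      infer_instance
    exact (cancel_mono (ι.hom ▷ (z₂ ≫ z₁ ≫ G))).mp (by simpa using ex)
  have hom_inv : (π₁ ≫ s₁) ◁ (z₂ ◁ θ₁) ≫ (π₁ ≫ s₁) ◁ θ₂ = 𝟙 _ := by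
    rw [← Bicategory.whiskerLeft_comp]; exact f₁
  have inv_hom : (π₁ ≫ s₁) ◁ θ₂ ≫ (π₁ ≫ s₁) ◁ (z₂ ◁ θ₁) = 𝟙 _ := by
    rw [← Bicategory.whiskerLeft_comp]; exact f₂
  obtain ⟨A₁, y₁, hy₁⟩ := h2 (π₁ ≫ s₁) z₂ hc hz₂
  obtain ⟨A₂, y₂, hy₂⟩ := h2 (y₁ ≫ (π₁ ≫ s₁) ≫ z₂) z₁ hy₁ hz₁
  refine ⟨A₂, y₂ ≫ (y₁ ≫ (π₁ ≫ s₁) ≫ z₂) ≫ z₁, hy₂, ?_⟩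
  set u : A₂ ⟶ x := y₂ ≫ (y₁ ≫ (π₁ ≫ s₁) ≫ z₂) ≫ z₁ with hu
  have hhi : (𝟙 (u ≫ F) ⊗≫ y₂ ◁ (y₁ ◁ ((π₁ ≫ s₁) ◁ (z₂ ◁ θ₁))) ⊗≫ 𝟙 (u ≫ G)) ≫
      (𝟙 (u ≫ G) ⊗≫ y₂ ◁ (y₁ ◁ ((π₁ ≫ s₁) ◁ θ₂)) ⊗≫ 𝟙 (u ≫ F)) = 𝟙 (u ≫ F) := by
    have step : (𝟙 (u ≫ F) ⊗≫ y₂ ◁ (y₁ ◁ ((π₁ ≫ s₁) ◁ (z₂ ◁ θ₁))) ⊗≫ 𝟙 (u ≫ G)) ≫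
        (𝟙 (u ≫ G) ⊗≫ y₂ ◁ (y₁ ◁ ((π₁ ≫ s₁) ◁ θ₂)) ⊗≫ 𝟙 (u ≫ F)) =
        𝟙 (u ≫ F) ⊗≫
          y₂ ◁ (y₁ ◁ ((π₁ ≫ s₁) ◁ (z₂ ◁ θ₁) ≫ (π₁ ≫ s₁) ◁ θ₂)) ⊗≫ 𝟙 (u ≫ F) := by
      bicategory
    rw [step, hom_inv]
    bicategory
  have hih : (𝟙 (u ≫ G) ⊗≫ y₂ ◁ (y₁ ◁ ((π₁ ≫ s₁) ◁ θ₂)) ⊗≫ 𝟙 (u ≫ F)) ≫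
      (𝟙 (u ≫ F) ⊗≫ y₂ ◁ (y₁ ◁ ((π₁ ≫ s₁) ◁ (z₂ ◁ θ₁))) ⊗≫ 𝟙 (u ≫ G)) = 𝟙 (u ≫ G) := by
    have step : (𝟙 (u ≫ G) ⊗≫ y₂ ◁ (y₁ ◁ ((π₁ ≫ s₁) ◁ θ₂)) ⊗≫ 𝟙 (u ≫ F)) ≫
        (𝟙 (u ≫ F) ⊗≫ y₂ ◁ (y₁ ◁ ((π₁ ≫ s₁) ◁ (z₂ ◁ θ₁))) ⊗≫ 𝟙 (u ≫ G)) =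
        𝟙 (u ≫ G) ⊗≫
          y₂ ◁ (y₁ ◁ ((π₁ ≫ s₁) ◁ θ₂ ≫ (π₁ ≫ s₁) ◁ (z₂ ◁ θ₁))) ⊗≫ 𝟙 (u ≫ G) := by
      bicategory
    rw [step, inv_hom]
    bicategory
  refine ⟨⟨𝟙 (u ≫ F) ⊗≫ y₂ ◁ (y₁ ◁ ((π₁ ≫ s₁) ◁ (z₂ ◁ θ₁))) ⊗≫ 𝟙 (u ≫ G),
    𝟙 (u ≫ G) ⊗≫ y₂ ◁ (y₁ ◁ ((π₁ ≫ s₁) ◁ θ₂)) ⊗≫ 𝟙 (u ≫ F), hhi, hih⟩, ?_⟩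
  show (𝟙 (u ≫ F) ⊗≫ y₂ ◁ (y₁ ◁ ((π₁ ≫ s₁) ◁ (z₂ ◁ θ₁))) ⊗≫ 𝟙 (u ≫ G)) ▷ wm =
      (α_ u F wm).hom ≫ u ◁ η.hom ≫ (α_ u G wm).inv
  have expose : (𝟙 (u ≫ F) ⊗≫ y₂ ◁ (y₁ ◁ ((π₁ ≫ s₁) ◁ (z₂ ◁ θ₁))) ⊗≫ 𝟙 (u ≫ G)) ▷ wm =
      𝟙 ((u ≫ F) ≫ wm) ⊗≫ y₂ ◁ (y₁ ◁ ((π₁ ≫ s₁) ◁ (z₂ ◁ (θ₁ ▷ wm)))) ⊗≫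
        𝟙 ((u ≫ G) ≫ wm) := by
    bicategory
  rw [expose, L₁]
  bicategory

/-- Refining an equivalence equation along a further arrow. -/
lemma refine_eq {e' e d d' c₁' c₂' X : B} (Y : e' ⟶ e) (s : e ⟶ d) (t : e ⟶ d')
    (v₁ : d ⟶ c₁') (v₂ : d ⟶ c₂') (v₁' : d' ⟶ c₁') (v₂' : d' ⟶ c₂')
    (g₁ : c₁' ⟶ X) (g₂ : c₂' ⟶ X)
    (γ : v₁ ≫ g₁ ⟶ v₂ ≫ g₂) (γ' : v₁' ≫ g₁ ⟶ v₂' ≫ g₂)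
    (ε₁ : s ≫ v₁ ≅ t ≫ v₁') (ε₂ : s ≫ v₂ ≅ t ≫ v₂')
    (E₁ : (Y ≫ s) ≫ v₁ ≅ (Y ≫ t) ≫ v₁') (E₂ : (Y ≫ s) ≫ v₂ ≅ (Y ≫ t) ≫ v₂')
    (hE₁ : E₁.hom = (α_ Y s v₁).hom ≫ Y ◁ ε₁.hom ≫ (α_ Y t v₁').inv)
    (hE₂ : E₂.hom = (α_ Y s v₂).hom ≫ Y ◁ ε₂.hom ≫ (α_ Y t v₂').inv)
    (H : ε₁.hom ▷ g₁ ≫ (α_ t v₁' g₁).hom ≫ t ◁ γ' ≫ (α_ t v₂' g₂).inv =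
      (α_ s v₁ g₁).hom ≫ s ◁ γ ≫ (α_ s v₂ g₂).inv ≫ ε₂.hom ▷ g₂) :
    E₁.hom ▷ g₁ ≫ (α_ (Y ≫ t) v₁' g₁).hom ≫ (Y ≫ t) ◁ γ' ≫ (α_ (Y ≫ t) v₂' g₂).inv =
      (α_ (Y ≫ s) v₁ g₁).hom ≫ (Y ≫ s) ◁ γ ≫ (α_ (Y ≫ s) v₂ g₂).inv ≫ E₂.hom ▷ g₂ := by
  rw [hE₁, hE₂]
  calc ((α_ Y s v₁).hom ≫ Y ◁ ε₁.hom ≫ (α_ Y t v₁').inv) ▷ g₁ ≫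
        (α_ (Y ≫ t) v₁' g₁).hom ≫ (Y ≫ t) ◁ γ' ≫ (α_ (Y ≫ t) v₂' g₂).inv
      = 𝟙 (((Y ≫ s) ≫ v₁) ≫ g₁) ⊗≫
          Y ◁ (ε₁.hom ▷ g₁ ≫ (α_ t v₁' g₁).hom ≫ t ◁ γ' ≫ (α_ t v₂' g₂).inv) ⊗≫
          𝟙 (((Y ≫ t) ≫ v₂') ≫ g₂) := by
        bicategory
    _ = 𝟙 (((Y ≫ s) ≫ v₁) ≫ g₁) ⊗≫
          Y ◁ ((α_ s v₁ g₁).hom ≫ s ◁ γ ≫ (α_ s v₂ g₂).inv ≫ ε₂.hom ▷ g₂) ⊗≫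
          𝟙 (((Y ≫ t) ≫ v₂') ≫ g₂) := by
        rw [H]
    _ = (α_ (Y ≫ s) v₁ g₁).hom ≫ (Y ≫ s) ◁ γ ≫ (α_ (Y ≫ s) v₂ g₂).inv ≫
          ((α_ Y s v₂).hom ≫ Y ◁ ε₂.hom ≫ (α_ Y t v₂').inv) ▷ g₂ := by
        bicategory


/-- The representation of a 2-cell diagram over the chosen pseudo pullback. -/
lemma exists_rep (h1 : W.WB1) (h2 : W.WB2) (h3 : W.WB3) (h4 : W.WB4) (h5 : W.WB5)
    (hcoff : ∀ ⦃x y : B⦄ (f : x ⟶ y), W f → CoFF f)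
    (pb : ∀ {x y z : B} (u : x ⟶ z) (vm : y ⟶ z), W u → W vm → PseudoPullbackData u vm)
    (hpbc : ∀ {x y z : B} (u : x ⟶ z) (vm : y ⟶ z) (hu : W u) (hv : W vm),
      W ((pb u vm hu hv).fst ≫ u))
    {a b c₁ c₂ : B} (u₁ : c₁ ⟶ a) (f₁ : c₁ ⟶ b) (u₂ : c₂ ⟶ a) (f₂ : c₂ ⟶ b)
    (hu₁ : W u₁) (hu₂ : W u₂)
    (P : PseudoPullbackData u₁ u₂) (hP : W (P.fst ≫ u₁))
    {d : B} (v₁ : d ⟶ c₁) (v₂ : d ⟶ c₂) (hv : W (v₁ ≫ u₁))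
    (αc : v₁ ≫ u₁ ≅ v₂ ≫ u₂) (β : v₁ ≫ f₁ ⟶ v₂ ≫ f₂) :
    ∃ δ : P.fst ≫ f₁ ⟶ P.snd ≫ f₂,
      DiagEquiv W u₁ f₁ u₂ f₂ v₁ v₂ αc β P.fst P.snd P.iso δ := by
  obtain ⟨pt, p, q, ω, lf, lFst, lSnd, lw⟩ := P
  dsimp only at hP ⊢
  obtain ⟨l, μ, ν, LW⟩ :
      ∃ (l : d ⟶ pt) (μ : l ≫ p ≅ v₁) (ν : l ≫ q ≅ v₂),
        (α_ l p u₁).hom ≫ l ◁ ω.hom ≫ (α_ l q u₂).inv ≫ ν.hom ▷ u₂ =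
          μ.hom ▷ u₁ ≫ αc.hom :=
    ⟨lf v₁ v₂ αc, lFst v₁ v₂ αc, lSnd v₁ v₂ αc, lw v₁ v₂ αc⟩
  obtain ⟨d₀, g, m, hm, ⟨κ⟩⟩ := h3 (v₁ ≫ u₁) (p ≫ u₁) hv
  haveI : IsIso (𝟙 ((g ≫ l) ≫ (p ≫ u₁)) ⊗≫ g ◁ (μ.hom ▷ u₁) ⊗≫ κ.hom) := by
    infer_instance
  obtain ⟨χ, hχ⟩ : ∃ χ : (g ≫ l) ≫ (p ≫ u₁) ≅ m ≫ (p ≫ u₁),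
      χ.hom = 𝟙 ((g ≫ l) ≫ (p ≫ u₁)) ⊗≫ g ◁ (μ.hom ▷ u₁) ⊗≫ κ.hom :=
    ⟨asIso _, rfl⟩
  obtain ⟨E, z, hz, θ, Lθ⟩ := inv_lift h1 h2 h4 h5 pb hpbc (g ≫ l) m (p ≫ u₁) hP χ
  haveI : IsIso (𝟙 ((z ≫ g) ≫ v₁) ⊗≫ z ◁ (g ◁ μ.inv) ⊗≫ θ.hom ▷ p ⊗≫ 𝟙 ((z ≫ m) ≫ p)) := by
    infer_instance
  obtain ⟨ε₁, hε₁⟩ : ∃ ε₁ : (z ≫ g) ≫ v₁ ≅ (z ≫ m) ≫ p,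
      ε₁.hom = 𝟙 ((z ≫ g) ≫ v₁) ⊗≫ z ◁ (g ◁ μ.inv) ⊗≫ θ.hom ▷ p ⊗≫ 𝟙 ((z ≫ m) ≫ p) :=
    ⟨asIso _, rfl⟩
  haveI : IsIso (𝟙 ((z ≫ g) ≫ v₂) ⊗≫ z ◁ (g ◁ ν.inv) ⊗≫ θ.hom ▷ q ⊗≫ 𝟙 ((z ≫ m) ≫ q)) := by
    infer_instance
  obtain ⟨ε₂, hε₂⟩ : ∃ ε₂ : (z ≫ g) ≫ v₂ ≅ (z ≫ m) ≫ q,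
      ε₂.hom = 𝟙 ((z ≫ g) ≫ v₂) ⊗≫ z ◁ (g ◁ ν.inv) ⊗≫ θ.hom ▷ q ⊗≫ 𝟙 ((z ≫ m) ≫ q) :=
    ⟨asIso _, rfl⟩
  -- descend the right-hand cell along `z ≫ m`
  obtain ⟨ζ, hζ, -⟩ := hcoff z hz _ _
    ((α_ z m (p ≫ f₁)).inv ≫
      (𝟙 ((z ≫ m) ≫ (p ≫ f₁)) ⊗≫ ε₁.inv ▷ f₁ ⊗≫ (z ≫ g) ◁ β ⊗≫ ε₂.hom ▷ f₂ ⊗≫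
        𝟙 ((z ≫ m) ≫ (q ≫ f₂))) ≫ (α_ z m (q ≫ f₂)).hom)
  obtain ⟨δ, hδ, -⟩ := hcoff m hm _ _ ζ
  have hdesc : (z ≫ m) ◁ δ =
      𝟙 ((z ≫ m) ≫ (p ≫ f₁)) ⊗≫ ε₁.inv ▷ f₁ ⊗≫ (z ≫ g) ◁ β ⊗≫ ε₂.hom ▷ f₂ ⊗≫
        𝟙 ((z ≫ m) ≫ (q ≫ f₂)) := by
    rw [Bicategory.comp_whiskerLeft, hδ, hζ]
    simp
  -- exchange of θ with ω
  have Lθq : θ.hom ▷ (q ≫ u₂) =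
      (z ≫ (g ≫ l)) ◁ ω.inv ≫ θ.hom ▷ (p ≫ u₁) ≫ (z ≫ m) ◁ ω.hom := by
    rw [← whisker_exchange θ.hom ω.hom, whiskerLeft_inv_hom_assoc]
  -- the filler rearranged
  have lωinv : l ◁ ω.inv =
      (α_ l q u₂).inv ≫ ν.hom ▷ u₂ ≫ αc.inv ≫ μ.inv ▷ u₁ ≫ (α_ l p u₁).hom := by
    have lω : l ◁ ω.hom =
        (α_ l p u₁).inv ≫ (μ.hom ▷ u₁ ≫ αc.hom) ≫ ν.inv ▷ u₂ ≫ (α_ l q u₂).hom := by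
      rw [← LW]; simp
    rw [← cancel_epi (l ◁ ω.hom), whiskerLeft_hom_inv, lω]
    simp
  -- the two base equations
  have EA : ε₁.hom ▷ u₁ ≫ (α_ (z ≫ m) p u₁).hom ≫ (z ≫ m) ◁ ω.hom ≫
        (α_ (z ≫ m) q u₂).inv =
      (α_ (z ≫ g) v₁ u₁).hom ≫ (z ≫ g) ◁ αc.hom ≫ (α_ (z ≫ g) v₂ u₂).inv ≫
        ε₂.hom ▷ u₂ := by
    have LHSnf : ε₁.hom ▷ u₁ ≫ (α_ (z ≫ m) p u₁).hom ≫ (z ≫ m) ◁ ω.hom ≫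
          (α_ (z ≫ m) q u₂).inv =
        𝟙 (((z ≫ g) ≫ v₁) ≫ u₁) ⊗≫ z ◁ κ.hom ⊗≫ (z ≫ m) ◁ ω.hom ⊗≫
          𝟙 (((z ≫ m) ≫ q) ≫ u₂) := by
      rw [hε₁]
      calc (𝟙 ((z ≫ g) ≫ v₁) ⊗≫ z ◁ (g ◁ μ.inv) ⊗≫ θ.hom ▷ p ⊗≫ 𝟙 ((z ≫ m) ≫ p)) ▷ u₁ ≫
            (α_ (z ≫ m) p u₁).hom ≫ (z ≫ m) ◁ ω.hom ≫ (α_ (z ≫ m) q u₂).inv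
          = 𝟙 (((z ≫ g) ≫ v₁) ≫ u₁) ⊗≫ z ◁ (g ◁ (μ.inv ▷ u₁)) ⊗≫ θ.hom ▷ (p ≫ u₁) ⊗≫
              (z ≫ m) ◁ ω.hom ⊗≫ 𝟙 (((z ≫ m) ≫ q) ≫ u₂) := by
            bicategory
        _ = 𝟙 (((z ≫ g) ≫ v₁) ≫ u₁) ⊗≫ z ◁ (g ◁ (μ.inv ▷ u₁)) ⊗≫
              ((α_ z (g ≫ l) (p ≫ u₁)).hom ≫ z ◁ χ.hom ≫ (α_ z m (p ≫ u₁)).inv) ⊗≫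
              (z ≫ m) ◁ ω.hom ⊗≫ 𝟙 (((z ≫ m) ≫ q) ≫ u₂) := by
            rw [Lθ]
        _ = 𝟙 (((z ≫ g) ≫ v₁) ≫ u₁) ⊗≫ z ◁ (g ◁ (μ.inv ▷ u₁)) ⊗≫
              ((α_ z (g ≫ l) (p ≫ u₁)).hom ≫
                z ◁ (𝟙 ((g ≫ l) ≫ (p ≫ u₁)) ⊗≫ g ◁ (μ.hom ▷ u₁) ⊗≫ κ.hom) ≫
                (α_ z m (p ≫ u₁)).inv) ⊗≫
              (z ≫ m) ◁ ω.hom ⊗≫ 𝟙 (((z ≫ m) ≫ q) ≫ u₂) := by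
            rw [hχ]
        _ = 𝟙 (((z ≫ g) ≫ v₁) ≫ u₁) ⊗≫ z ◁ (g ◁ (μ.inv ▷ u₁ ≫ μ.hom ▷ u₁)) ⊗≫
              z ◁ κ.hom ⊗≫ (z ≫ m) ◁ ω.hom ⊗≫ 𝟙 (((z ≫ m) ≫ q) ≫ u₂) := by
            bicategory
        _ = 𝟙 (((z ≫ g) ≫ v₁) ≫ u₁) ⊗≫ z ◁ κ.hom ⊗≫ (z ≫ m) ◁ ω.hom ⊗≫
              𝟙 (((z ≫ m) ≫ q) ≫ u₂) := by
            rw [inv_hom_whiskerRight]; bicategory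
    have RHSnf : (α_ (z ≫ g) v₁ u₁).hom ≫ (z ≫ g) ◁ αc.hom ≫ (α_ (z ≫ g) v₂ u₂).inv ≫
          ε₂.hom ▷ u₂ =
        𝟙 (((z ≫ g) ≫ v₁) ≫ u₁) ⊗≫ z ◁ κ.hom ⊗≫ (z ≫ m) ◁ ω.hom ⊗≫
          𝟙 (((z ≫ m) ≫ q) ≫ u₂) := by
      rw [hε₂]
      calc (α_ (z ≫ g) v₁ u₁).hom ≫ (z ≫ g) ◁ αc.hom ≫ (α_ (z ≫ g) v₂ u₂).inv ≫
            (𝟙 ((z ≫ g) ≫ v₂) ⊗≫ z ◁ (g ◁ ν.inv) ⊗≫ θ.hom ▷ q ⊗≫ 𝟙 ((z ≫ m) ≫ q)) ▷ u₂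
          = 𝟙 (((z ≫ g) ≫ v₁) ≫ u₁) ⊗≫ z ◁ (g ◁ αc.hom) ⊗≫ z ◁ (g ◁ (ν.inv ▷ u₂)) ⊗≫
              θ.hom ▷ (q ≫ u₂) ⊗≫ 𝟙 (((z ≫ m) ≫ q) ≫ u₂) := by
            bicategory
        _ = 𝟙 (((z ≫ g) ≫ v₁) ≫ u₁) ⊗≫ z ◁ (g ◁ αc.hom) ⊗≫ z ◁ (g ◁ (ν.inv ▷ u₂)) ⊗≫
              ((z ≫ (g ≫ l)) ◁ ω.inv ≫ θ.hom ▷ (p ≫ u₁) ≫ (z ≫ m) ◁ ω.hom) ⊗≫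
              𝟙 (((z ≫ m) ≫ q) ≫ u₂) := by
            rw [Lθq]
        _ = 𝟙 (((z ≫ g) ≫ v₁) ≫ u₁) ⊗≫ z ◁ (g ◁ αc.hom) ⊗≫ z ◁ (g ◁ (ν.inv ▷ u₂)) ⊗≫
              ((z ≫ (g ≫ l)) ◁ ω.inv ≫
                ((α_ z (g ≫ l) (p ≫ u₁)).hom ≫
                  z ◁ (𝟙 ((g ≫ l) ≫ (p ≫ u₁)) ⊗≫ g ◁ (μ.hom ▷ u₁) ⊗≫ κ.hom) ≫
                  (α_ z m (p ≫ u₁)).inv) ≫ (z ≫ m) ◁ ω.hom) ⊗≫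
              𝟙 (((z ≫ m) ≫ q) ≫ u₂) := by
            rw [Lθ, hχ]
        _ = 𝟙 (((z ≫ g) ≫ v₁) ≫ u₁) ⊗≫ z ◁ (g ◁ αc.hom) ⊗≫ z ◁ (g ◁ (ν.inv ▷ u₂)) ⊗≫
              z ◁ (g ◁ (l ◁ ω.inv)) ⊗≫ z ◁ (g ◁ (μ.hom ▷ u₁)) ⊗≫ z ◁ κ.hom ⊗≫
              (z ≫ m) ◁ ω.hom ⊗≫ 𝟙 (((z ≫ m) ≫ q) ≫ u₂) := by
            bicategory
        _ = 𝟙 (((z ≫ g) ≫ v₁) ≫ u₁) ⊗≫ z ◁ (g ◁ αc.hom) ⊗≫ z ◁ (g ◁ (ν.inv ▷ u₂)) ⊗≫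
              z ◁ (g ◁ ((α_ l q u₂).inv ≫ ν.hom ▷ u₂ ≫ αc.inv ≫ μ.inv ▷ u₁ ≫
                (α_ l p u₁).hom)) ⊗≫ z ◁ (g ◁ (μ.hom ▷ u₁)) ⊗≫ z ◁ κ.hom ⊗≫
              (z ≫ m) ◁ ω.hom ⊗≫ 𝟙 (((z ≫ m) ≫ q) ≫ u₂) := by
            rw [lωinv]
        _ = 𝟙 (((z ≫ g) ≫ v₁) ≫ u₁) ⊗≫ z ◁ (g ◁ αc.hom) ⊗≫
              z ◁ (g ◁ (ν.inv ▷ u₂ ≫ ν.hom ▷ u₂)) ⊗≫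
              z ◁ (g ◁ αc.inv) ⊗≫ z ◁ (g ◁ (μ.inv ▷ u₁ ≫ μ.hom ▷ u₁)) ⊗≫ z ◁ κ.hom ⊗≫
              (z ≫ m) ◁ ω.hom ⊗≫ 𝟙 (((z ≫ m) ≫ q) ≫ u₂) := by
            bicategory
        _ = 𝟙 (((z ≫ g) ≫ v₁) ≫ u₁) ⊗≫ z ◁ (g ◁ (αc.hom ≫ αc.inv)) ⊗≫ z ◁ κ.hom ⊗≫
              (z ≫ m) ◁ ω.hom ⊗≫ 𝟙 (((z ≫ m) ≫ q) ≫ u₂) := by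
            rw [inv_hom_whiskerRight, inv_hom_whiskerRight]; bicategory
        _ = 𝟙 (((z ≫ g) ≫ v₁) ≫ u₁) ⊗≫ z ◁ κ.hom ⊗≫ (z ≫ m) ◁ ω.hom ⊗≫
              𝟙 (((z ≫ m) ≫ q) ≫ u₂) := by
            rw [Iso.hom_inv_id]; bicategory
    rw [LHSnf, RHSnf]
  have EB : ε₁.hom ▷ f₁ ≫ (α_ (z ≫ m) p f₁).hom ≫ (z ≫ m) ◁ δ ≫
        (α_ (z ≫ m) q f₂).inv =
      (α_ (z ≫ g) v₁ f₁).hom ≫ (z ≫ g) ◁ β ≫ (α_ (z ≫ g) v₂ f₂).inv ≫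
        ε₂.hom ▷ f₂ := by
    rw [hdesc]
    calc ε₁.hom ▷ f₁ ≫ (α_ (z ≫ m) p f₁).hom ≫
          (𝟙 ((z ≫ m) ≫ (p ≫ f₁)) ⊗≫ ε₁.inv ▷ f₁ ⊗≫ (z ≫ g) ◁ β ⊗≫ ε₂.hom ▷ f₂ ⊗≫
            𝟙 ((z ≫ m) ≫ (q ≫ f₂))) ≫ (α_ (z ≫ m) q f₂).inv
        = 𝟙 (((z ≫ g) ≫ v₁) ≫ f₁) ⊗≫ (ε₁.hom ▷ f₁ ≫ ε₁.inv ▷ f₁) ⊗≫ (z ≫ g) ◁ β ⊗≫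
            ε₂.hom ▷ f₂ ⊗≫ 𝟙 (((z ≫ m) ≫ q) ≫ f₂) := by
          bicategory
      _ = 𝟙 (((z ≫ g) ≫ v₁) ≫ f₁) ⊗≫ (z ≫ g) ◁ β ⊗≫ ε₂.hom ▷ f₂ ⊗≫
            𝟙 (((z ≫ m) ≫ q) ≫ f₂) := by
          rw [hom_inv_whiskerRight]; bicategory
      _ = (α_ (z ≫ g) v₁ f₁).hom ≫ (z ≫ g) ◁ β ≫ (α_ (z ≫ g) v₂ f₂).inv ≫
            ε₂.hom ▷ f₂ := by
          bicategory
  -- refinement to get the `W`-condition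
  obtain ⟨A₁, y₁, hy₁⟩ := h2 z m hz hm
  obtain ⟨A₂, y₂, hy₂⟩ := h2 (y₁ ≫ z ≫ m) (p ≫ u₁) hy₁ hP
  obtain ⟨E₁, hE₁⟩ : ∃ E₁ : ((y₂ ≫ y₁) ≫ (z ≫ g)) ≫ v₁ ≅ ((y₂ ≫ y₁) ≫ (z ≫ m)) ≫ p,
      E₁.hom = (α_ (y₂ ≫ y₁) (z ≫ g) v₁).hom ≫ (y₂ ≫ y₁) ◁ ε₁.hom ≫
        (α_ (y₂ ≫ y₁) (z ≫ m) p).inv :=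
    ⟨(α_ (y₂ ≫ y₁) (z ≫ g) v₁) ≪≫ whiskerLeftIso (y₂ ≫ y₁) ε₁ ≪≫
      (α_ (y₂ ≫ y₁) (z ≫ m) p).symm, by simp⟩
  obtain ⟨E₂, hE₂⟩ : ∃ E₂ : ((y₂ ≫ y₁) ≫ (z ≫ g)) ≫ v₂ ≅ ((y₂ ≫ y₁) ≫ (z ≫ m)) ≫ q,
      E₂.hom = (α_ (y₂ ≫ y₁) (z ≫ g) v₂).hom ≫ (y₂ ≫ y₁) ◁ ε₂.hom ≫
        (α_ (y₂ ≫ y₁) (z ≫ m) q).inv :=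
    ⟨(α_ (y₂ ≫ y₁) (z ≫ g) v₂) ≪≫ whiskerLeftIso (y₂ ≫ y₁) ε₂ ≪≫
      (α_ (y₂ ≫ y₁) (z ≫ m) q).symm, by simp⟩
  refine ⟨δ, A₂, (y₂ ≫ y₁) ≫ (z ≫ g), (y₂ ≫ y₁) ≫ (z ≫ m), ?_, E₁, E₂, ?_, ?_⟩
  · refine h5 _ (y₂ ≫ (y₁ ≫ z ≫ m) ≫ (p ≫ u₁)) hy₂ ⟨?_⟩
    haveI : IsIso (𝟙 ((((y₂ ≫ y₁) ≫ (z ≫ g)) ≫ v₁) ≫ u₁) ⊗≫ (y₂ ≫ y₁) ◁ (z ◁ κ.hom) ⊗≫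
        𝟙 (y₂ ≫ (y₁ ≫ z ≫ m) ≫ (p ≫ u₁))) := by
      infer_instance
    exact asIso (𝟙 ((((y₂ ≫ y₁) ≫ (z ≫ g)) ≫ v₁) ≫ u₁) ⊗≫ (y₂ ≫ y₁) ◁ (z ◁ κ.hom) ⊗≫
      𝟙 (y₂ ≫ (y₁ ≫ z ≫ m) ≫ (p ≫ u₁)))
  · exact refine_eq (y₂ ≫ y₁) (z ≫ g) (z ≫ m) v₁ v₂ p q u₁ u₂ αc.hom ω.hom
      ε₁ ε₂ E₁ E₂ hE₁ hE₂ EA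
  · exact refine_eq (y₂ ≫ y₁) (z ≫ g) (z ≫ m) v₁ v₂ p q f₁ f₂ β δ
      ε₁ ε₂ E₁ E₂ hE₁ hE₂ EB


/-- Uniqueness of the right-hand 2-cell over the pseudo pullback representative. -/
lemma unique_rep (h1 : W.WB1) (h2 : W.WB2) (h3 : W.WB3) (h4 : W.WB4) (h5 : W.WB5)
    (hcoff : ∀ ⦃x y : B⦄ (f : x ⟶ y), W f → CoFF f)
    (pb : ∀ {x y z : B} (u : x ⟶ z) (vm : y ⟶ z), W u → W vm → PseudoPullbackData u vm)
    (hpbc : ∀ {x y z : B} (u : x ⟶ z) (vm : y ⟶ z) (hu : W u) (hv : W vm),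
      W ((pb u vm hu hv).fst ≫ u))
    {a b c₁ c₂ : B} (u₁ : c₁ ⟶ a) (f₁ : c₁ ⟶ b) (u₂ : c₂ ⟶ a) (f₂ : c₂ ⟶ b)
    (hu₁ : W u₁) (hu₂ : W u₂)
    (P : PseudoPullbackData u₁ u₂) (hP : W (P.fst ≫ u₁))
    (δ₁ δ₂ : P.fst ≫ f₁ ⟶ P.snd ≫ f₂)
    (hD : DiagEquiv W u₁ f₁ u₂ f₂ P.fst P.snd P.iso δ₁ P.fst P.snd P.iso δ₂) :
    δ₁ = δ₂ := by
  obtain ⟨pt, p, q, ω, lf, lFst, lSnd, lw⟩ := P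
  dsimp only at hP hD δ₁ δ₂ ⊢
  obtain ⟨e, s, t, hW, ε₁, ε₂, hA, hB⟩ := hD
  -- the cover from [WB3]
  obtain ⟨d₀, g, m, hm, ⟨κ⟩⟩ := h3 ((s ≫ p) ≫ u₁) (p ≫ u₁) hW
  -- comparison of `g ≫ t` with `m`
  haveI : IsIso (𝟙 ((g ≫ t) ≫ (p ≫ u₁)) ⊗≫ g ◁ (ε₁.inv ▷ u₁) ⊗≫ κ.hom) := by
    infer_instance
  obtain ⟨χt, hχt⟩ : ∃ χt : (g ≫ t) ≫ (p ≫ u₁) ≅ m ≫ (p ≫ u₁),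
      χt.hom = 𝟙 ((g ≫ t) ≫ (p ≫ u₁)) ⊗≫ g ◁ (ε₁.inv ▷ u₁) ⊗≫ κ.hom :=
    ⟨asIso _, rfl⟩
  obtain ⟨D₁, z₁, hz₁, θ₁, L₁⟩ := inv_lift h1 h2 h4 h5 pb hpbc (g ≫ t) m (p ≫ u₁) hP χt
  -- comparison of `(z₁ ≫ g) ≫ s` with `z₁ ≫ m`
  haveI : IsIso (𝟙 (((z₁ ≫ g) ≫ s) ≫ (p ≫ u₁)) ⊗≫ z₁ ◁ κ.hom ⊗≫
      𝟙 ((z₁ ≫ m) ≫ (p ≫ u₁))) := by infer_instance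
  obtain ⟨χs, hχs⟩ : ∃ χs : ((z₁ ≫ g) ≫ s) ≫ (p ≫ u₁) ≅ (z₁ ≫ m) ≫ (p ≫ u₁),
      χs.hom = 𝟙 (((z₁ ≫ g) ≫ s) ≫ (p ≫ u₁)) ⊗≫ z₁ ◁ κ.hom ⊗≫
        𝟙 ((z₁ ≫ m) ≫ (p ≫ u₁)) :=
    ⟨asIso _, rfl⟩
  obtain ⟨D₂, z₂, hz₂, θ₂, L₂⟩ :=
    inv_lift h1 h2 h4 h5 pb hpbc ((z₁ ≫ g) ≫ s) (z₁ ≫ m) (p ≫ u₁) hP χs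
  -- inverse versions of the comparison 2-cells
  have hχs_inv : χs.inv = 𝟙 ((z₁ ≫ m) ≫ (p ≫ u₁)) ⊗≫ z₁ ◁ κ.inv ⊗≫
      𝟙 (((z₁ ≫ g) ≫ s) ≫ (p ≫ u₁)) := by
    rw [← cancel_epi χs.hom, Iso.hom_inv_id, hχs]
    have step : (𝟙 (((z₁ ≫ g) ≫ s) ≫ (p ≫ u₁)) ⊗≫ z₁ ◁ κ.hom ⊗≫
        𝟙 ((z₁ ≫ m) ≫ (p ≫ u₁))) ≫ (𝟙 ((z₁ ≫ m) ≫ (p ≫ u₁)) ⊗≫ z₁ ◁ κ.inv ⊗≫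
        𝟙 (((z₁ ≫ g) ≫ s) ≫ (p ≫ u₁))) =
        𝟙 (((z₁ ≫ g) ≫ s) ≫ (p ≫ u₁)) ⊗≫ z₁ ◁ (κ.hom ≫ κ.inv) ⊗≫
        𝟙 (((z₁ ≫ g) ≫ s) ≫ (p ≫ u₁)) := by bicategory
    rw [step, Iso.hom_inv_id]
    bicategory
  have hχt_inv : χt.inv = 𝟙 (m ≫ (p ≫ u₁)) ⊗≫ κ.inv ⊗≫ g ◁ (ε₁.hom ▷ u₁) ⊗≫
      𝟙 ((g ≫ t) ≫ (p ≫ u₁)) := by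
    rw [← cancel_epi χt.hom, Iso.hom_inv_id, hχt]
    have step : (𝟙 ((g ≫ t) ≫ (p ≫ u₁)) ⊗≫ g ◁ (ε₁.inv ▷ u₁) ⊗≫ κ.hom) ≫
        (𝟙 (m ≫ (p ≫ u₁)) ⊗≫ κ.inv ⊗≫ g ◁ (ε₁.hom ▷ u₁) ⊗≫
          𝟙 ((g ≫ t) ≫ (p ≫ u₁))) =
        𝟙 ((g ≫ t) ≫ (p ≫ u₁)) ⊗≫ g ◁ (ε₁.inv ▷ u₁) ⊗≫ (κ.hom ≫ κ.inv) ⊗≫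
          g ◁ (ε₁.hom ▷ u₁) ⊗≫ 𝟙 ((g ≫ t) ≫ (p ≫ u₁)) := by bicategory
    rw [step, Iso.hom_inv_id]
    have step2 : 𝟙 ((g ≫ t) ≫ (p ≫ u₁)) ⊗≫ g ◁ (ε₁.inv ▷ u₁) ⊗≫
        𝟙 (g ≫ (s ≫ p) ≫ u₁) ⊗≫ g ◁ (ε₁.hom ▷ u₁) ⊗≫ 𝟙 ((g ≫ t) ≫ (p ≫ u₁)) =
        𝟙 ((g ≫ t) ≫ (p ≫ u₁)) ⊗≫ g ◁ (ε₁.inv ▷ u₁ ≫ ε₁.hom ▷ u₁) ⊗≫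
          𝟙 ((g ≫ t) ≫ (p ≫ u₁)) := by bicategory
    rw [step2, inv_hom_whiskerRight]
    bicategory
  -- inverse lifting equations
  have L₁' : θ₁.inv ▷ (p ≫ u₁) =
      (α_ z₁ m (p ≫ u₁)).hom ≫ z₁ ◁ χt.inv ≫ (α_ z₁ (g ≫ t) (p ≫ u₁)).inv := by
    rw [← cancel_epi (θ₁.hom ▷ (p ≫ u₁)), hom_inv_whiskerRight, L₁]
    simp
  have L₂' : θ₂.inv ▷ (p ≫ u₁) =
      (α_ z₂ (z₁ ≫ m) (p ≫ u₁)).hom ≫ z₂ ◁ χs.inv ≫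
        (α_ z₂ ((z₁ ≫ g) ≫ s) (p ≫ u₁)).inv := by
    rw [← cancel_epi (θ₂.hom ▷ (p ≫ u₁)), hom_inv_whiskerRight, L₂]
    simp
  -- exchanges with the pullback 2-cell
  have EXω₂ : θ₂.hom ▷ (q ≫ u₂) =
      (z₂ ≫ ((z₁ ≫ g) ≫ s)) ◁ ω.inv ≫ θ₂.hom ▷ (p ≫ u₁) ≫
        (z₂ ≫ (z₁ ≫ m)) ◁ ω.hom := by
    rw [← whisker_exchange θ₂.hom ω.hom, whiskerLeft_inv_hom_assoc]
  have EXω₁ : θ₁.inv ▷ (q ≫ u₂) =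
      (z₁ ≫ m) ◁ ω.inv ≫ θ₁.inv ▷ (p ≫ u₁) ≫ (z₁ ≫ (g ≫ t)) ◁ ω.hom := by
    rw [← whisker_exchange θ₁.inv ω.hom, whiskerLeft_inv_hom_assoc]
  -- rearranged versions of the hypotheses
  have hε₂inv : ε₂.inv ▷ u₂ =
      (α_ t q u₂).hom ≫ t ◁ ω.inv ≫ (α_ t p u₁).inv ≫ ε₁.inv ▷ u₁ ≫
        (α_ s p u₁).hom ≫ s ◁ ω.hom ≫ (α_ s q u₂).inv := by
    have ε₂h : ε₂.hom ▷ u₂ =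
        (α_ s q u₂).hom ≫ s ◁ ω.inv ≫ (α_ s p u₁).inv ≫ ε₁.hom ▷ u₁ ≫
          (α_ t p u₁).hom ≫ t ◁ ω.hom ≫ (α_ t q u₂).inv := by
      rw [hA]; simp
    rw [← cancel_epi (ε₂.hom ▷ u₂), hom_inv_whiskerRight, ε₂h]
    simp
  have hB' : s ◁ δ₁ =
      (α_ s p f₁).inv ≫ ε₁.hom ▷ f₁ ≫ (α_ t p f₁).hom ≫ t ◁ δ₂ ≫
        (α_ t q f₂).inv ≫ ε₂.inv ▷ f₂ ≫ (α_ s q f₂).hom := by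
    rw [reassoc_of% hB]; simp
  -- the two defect 2-cells
  obtain ⟨Ψ₁, hΨ₁⟩ : ∃ Ψ₁ : (z₂ ≫ (z₁ ≫ m)) ≫ p ⟶ (z₂ ≫ (z₁ ≫ m)) ≫ p,
      Ψ₁ = 𝟙 ((z₂ ≫ (z₁ ≫ m)) ≫ p) ⊗≫ θ₂.inv ▷ p ⊗≫
        (z₂ ≫ (z₁ ≫ g)) ◁ ε₁.hom ⊗≫ z₂ ◁ (θ₁.hom ▷ p) ⊗≫
        𝟙 ((z₂ ≫ (z₁ ≫ m)) ≫ p) := ⟨_, rfl⟩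
  obtain ⟨Ψ₂, hΨ₂⟩ : ∃ Ψ₂ : (z₂ ≫ (z₁ ≫ m)) ≫ q ⟶ (z₂ ≫ (z₁ ≫ m)) ≫ q,
      Ψ₂ = 𝟙 ((z₂ ≫ (z₁ ≫ m)) ≫ q) ⊗≫ z₂ ◁ (θ₁.inv ▷ q) ⊗≫
        (z₂ ≫ (z₁ ≫ g)) ◁ ε₂.inv ⊗≫ θ₂.hom ▷ q ⊗≫
        𝟙 ((z₂ ≫ (z₁ ≫ m)) ≫ q) := ⟨_, rfl⟩
  -- the master equation
  have step1 : (z₂ ≫ (z₁ ≫ m)) ◁ δ₁ =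
      θ₂.inv ▷ (p ≫ f₁) ≫ (z₂ ≫ ((z₁ ≫ g) ≫ s)) ◁ δ₁ ≫ θ₂.hom ▷ (q ≫ f₂) := by
    rw [whisker_exchange θ₂.hom δ₁, inv_hom_whiskerRight_assoc]
  have step2 : (z₁ ≫ (g ≫ t)) ◁ δ₂ =
      θ₁.hom ▷ (p ≫ f₁) ≫ (z₁ ≫ m) ◁ δ₂ ≫ θ₁.inv ▷ (q ≫ f₂) := by
    rw [whisker_exchange θ₁.inv δ₂, hom_inv_whiskerRight_assoc]
  have MASTER : (z₂ ≫ (z₁ ≫ m)) ◁ δ₁ =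
      𝟙 ((z₂ ≫ (z₁ ≫ m)) ≫ (p ≫ f₁)) ⊗≫ Ψ₁ ▷ f₁ ⊗≫ (z₂ ≫ (z₁ ≫ m)) ◁ δ₂ ⊗≫
        Ψ₂ ▷ f₂ ⊗≫ 𝟙 ((z₂ ≫ (z₁ ≫ m)) ≫ (q ≫ f₂)) := by
    rw [step1]
    calc θ₂.inv ▷ (p ≫ f₁) ≫ (z₂ ≫ ((z₁ ≫ g) ≫ s)) ◁ δ₁ ≫ θ₂.hom ▷ (q ≫ f₂)
        = 𝟙 ((z₂ ≫ (z₁ ≫ m)) ≫ (p ≫ f₁)) ⊗≫ θ₂.inv ▷ (p ≫ f₁) ⊗≫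
            (z₂ ≫ (z₁ ≫ g)) ◁ (s ◁ δ₁) ⊗≫ θ₂.hom ▷ (q ≫ f₂) ⊗≫
            𝟙 ((z₂ ≫ (z₁ ≫ m)) ≫ (q ≫ f₂)) := by bicategory
      _ = 𝟙 ((z₂ ≫ (z₁ ≫ m)) ≫ (p ≫ f₁)) ⊗≫ θ₂.inv ▷ (p ≫ f₁) ⊗≫
            (z₂ ≫ (z₁ ≫ g)) ◁ ((α_ s p f₁).inv ≫ ε₁.hom ▷ f₁ ≫ (α_ t p f₁).hom ≫
              t ◁ δ₂ ≫ (α_ t q f₂).inv ≫ ε₂.inv ▷ f₂ ≫ (α_ s q f₂).hom) ⊗≫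
            θ₂.hom ▷ (q ≫ f₂) ⊗≫ 𝟙 ((z₂ ≫ (z₁ ≫ m)) ≫ (q ≫ f₂)) := by rw [hB']
      _ = 𝟙 ((z₂ ≫ (z₁ ≫ m)) ≫ (p ≫ f₁)) ⊗≫ θ₂.inv ▷ (p ≫ f₁) ⊗≫
            (z₂ ≫ (z₁ ≫ g)) ◁ (ε₁.hom ▷ f₁) ⊗≫
            z₂ ◁ ((z₁ ≫ (g ≫ t)) ◁ δ₂) ⊗≫
            (z₂ ≫ (z₁ ≫ g)) ◁ (ε₂.inv ▷ f₂) ⊗≫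
            θ₂.hom ▷ (q ≫ f₂) ⊗≫ 𝟙 ((z₂ ≫ (z₁ ≫ m)) ≫ (q ≫ f₂)) := by bicategory
      _ = 𝟙 ((z₂ ≫ (z₁ ≫ m)) ≫ (p ≫ f₁)) ⊗≫ θ₂.inv ▷ (p ≫ f₁) ⊗≫
            (z₂ ≫ (z₁ ≫ g)) ◁ (ε₁.hom ▷ f₁) ⊗≫
            z₂ ◁ (θ₁.hom ▷ (p ≫ f₁) ≫ (z₁ ≫ m) ◁ δ₂ ≫ θ₁.inv ▷ (q ≫ f₂)) ⊗≫
            (z₂ ≫ (z₁ ≫ g)) ◁ (ε₂.inv ▷ f₂) ⊗≫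
            θ₂.hom ▷ (q ≫ f₂) ⊗≫ 𝟙 ((z₂ ≫ (z₁ ≫ m)) ≫ (q ≫ f₂)) := by rw [step2]
      _ = 𝟙 ((z₂ ≫ (z₁ ≫ m)) ≫ (p ≫ f₁)) ⊗≫ Ψ₁ ▷ f₁ ⊗≫ (z₂ ≫ (z₁ ≫ m)) ◁ δ₂ ⊗≫
            Ψ₂ ▷ f₂ ⊗≫ 𝟙 ((z₂ ≫ (z₁ ≫ m)) ≫ (q ≫ f₂)) := by
          rw [hΨ₁, hΨ₂]; bicategory
  -- the defect cells are killed by whiskering with u₁ resp. u₂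
  have C1 : Ψ₁ ▷ u₁ = 𝟙 ((z₂ ≫ (z₁ ≫ m)) ≫ p) ▷ u₁ := by
    rw [hΨ₁]
    calc (𝟙 ((z₂ ≫ (z₁ ≫ m)) ≫ p) ⊗≫ θ₂.inv ▷ p ⊗≫ (z₂ ≫ (z₁ ≫ g)) ◁ ε₁.hom ⊗≫
          z₂ ◁ (θ₁.hom ▷ p) ⊗≫ 𝟙 ((z₂ ≫ (z₁ ≫ m)) ≫ p)) ▷ u₁
        = 𝟙 (((z₂ ≫ (z₁ ≫ m)) ≫ p) ≫ u₁) ⊗≫ θ₂.inv ▷ (p ≫ u₁) ⊗≫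
            (z₂ ≫ (z₁ ≫ g)) ◁ (ε₁.hom ▷ u₁) ⊗≫ z₂ ◁ (θ₁.hom ▷ (p ≫ u₁)) ⊗≫
            𝟙 (((z₂ ≫ (z₁ ≫ m)) ≫ p) ≫ u₁) := by bicategory
      _ = 𝟙 (((z₂ ≫ (z₁ ≫ m)) ≫ p) ≫ u₁) ⊗≫
            ((α_ z₂ (z₁ ≫ m) (p ≫ u₁)).hom ≫ z₂ ◁ χs.inv ≫
              (α_ z₂ ((z₁ ≫ g) ≫ s) (p ≫ u₁)).inv) ⊗≫
            (z₂ ≫ (z₁ ≫ g)) ◁ (ε₁.hom ▷ u₁) ⊗≫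
            z₂ ◁ ((α_ z₁ (g ≫ t) (p ≫ u₁)).hom ≫ z₁ ◁ χt.hom ≫
              (α_ z₁ m (p ≫ u₁)).inv) ⊗≫
            𝟙 (((z₂ ≫ (z₁ ≫ m)) ≫ p) ≫ u₁) := by rw [L₂', L₁]
      _ = 𝟙 (((z₂ ≫ (z₁ ≫ m)) ≫ p) ≫ u₁) ⊗≫
            z₂ ◁ (z₁ ◁ κ.inv) ⊗≫
            z₂ ◁ (z₁ ◁ (g ◁ (ε₁.hom ▷ u₁ ≫ ε₁.inv ▷ u₁))) ⊗≫
            z₂ ◁ (z₁ ◁ κ.hom) ⊗≫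
            𝟙 (((z₂ ≫ (z₁ ≫ m)) ≫ p) ≫ u₁) := by rw [hχs_inv, hχt]; bicategory
      _ = 𝟙 (((z₂ ≫ (z₁ ≫ m)) ≫ p) ≫ u₁) ⊗≫
            z₂ ◁ (z₁ ◁ (κ.inv ≫ κ.hom)) ⊗≫
            𝟙 (((z₂ ≫ (z₁ ≫ m)) ≫ p) ≫ u₁) := by rw [hom_inv_whiskerRight]; bicategory
      _ = 𝟙 ((z₂ ≫ (z₁ ≫ m)) ≫ p) ▷ u₁ := by rw [Iso.inv_hom_id]; bicategory
  have C2 : Ψ₂ ▷ u₂ = 𝟙 ((z₂ ≫ (z₁ ≫ m)) ≫ q) ▷ u₂ := by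
    rw [hΨ₂]
    calc (𝟙 ((z₂ ≫ (z₁ ≫ m)) ≫ q) ⊗≫ z₂ ◁ (θ₁.inv ▷ q) ⊗≫
          (z₂ ≫ (z₁ ≫ g)) ◁ ε₂.inv ⊗≫ θ₂.hom ▷ q ⊗≫
          𝟙 ((z₂ ≫ (z₁ ≫ m)) ≫ q)) ▷ u₂
        = 𝟙 (((z₂ ≫ (z₁ ≫ m)) ≫ q) ≫ u₂) ⊗≫ z₂ ◁ (θ₁.inv ▷ (q ≫ u₂)) ⊗≫
            (z₂ ≫ (z₁ ≫ g)) ◁ (ε₂.inv ▷ u₂) ⊗≫ θ₂.hom ▷ (q ≫ u₂) ⊗≫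
            𝟙 (((z₂ ≫ (z₁ ≫ m)) ≫ q) ≫ u₂) := by bicategory
      _ = 𝟙 (((z₂ ≫ (z₁ ≫ m)) ≫ q) ≫ u₂) ⊗≫
            z₂ ◁ ((z₁ ≫ m) ◁ ω.inv ≫ θ₁.inv ▷ (p ≫ u₁) ≫
              (z₁ ≫ (g ≫ t)) ◁ ω.hom) ⊗≫
            (z₂ ≫ (z₁ ≫ g)) ◁ ((α_ t q u₂).hom ≫ t ◁ ω.inv ≫ (α_ t p u₁).inv ≫
              ε₁.inv ▷ u₁ ≫ (α_ s p u₁).hom ≫ s ◁ ω.hom ≫ (α_ s q u₂).inv) ⊗≫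
            ((z₂ ≫ ((z₁ ≫ g) ≫ s)) ◁ ω.inv ≫ θ₂.hom ▷ (p ≫ u₁) ≫
              (z₂ ≫ (z₁ ≫ m)) ◁ ω.hom) ⊗≫
            𝟙 (((z₂ ≫ (z₁ ≫ m)) ≫ q) ≫ u₂) := by rw [EXω₁, hε₂inv, EXω₂]
      _ = 𝟙 (((z₂ ≫ (z₁ ≫ m)) ≫ q) ≫ u₂) ⊗≫
            (z₂ ≫ (z₁ ≫ m)) ◁ ω.inv ⊗≫
            z₂ ◁ (θ₁.inv ▷ (p ≫ u₁)) ⊗≫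
            (z₂ ≫ (z₁ ≫ (g ≫ t))) ◁ (ω.hom ≫ ω.inv) ⊗≫
            (z₂ ≫ (z₁ ≫ g)) ◁ (ε₁.inv ▷ u₁) ⊗≫
            (z₂ ≫ ((z₁ ≫ g) ≫ s)) ◁ (ω.hom ≫ ω.inv) ⊗≫
            θ₂.hom ▷ (p ≫ u₁) ⊗≫
            (z₂ ≫ (z₁ ≫ m)) ◁ ω.hom ⊗≫
            𝟙 (((z₂ ≫ (z₁ ≫ m)) ≫ q) ≫ u₂) := by bicategory
      _ = 𝟙 (((z₂ ≫ (z₁ ≫ m)) ≫ q) ≫ u₂) ⊗≫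
            (z₂ ≫ (z₁ ≫ m)) ◁ ω.inv ⊗≫
            z₂ ◁ (θ₁.inv ▷ (p ≫ u₁)) ⊗≫
            (z₂ ≫ (z₁ ≫ g)) ◁ (ε₁.inv ▷ u₁) ⊗≫
            θ₂.hom ▷ (p ≫ u₁) ⊗≫
            (z₂ ≫ (z₁ ≫ m)) ◁ ω.hom ⊗≫
            𝟙 (((z₂ ≫ (z₁ ≫ m)) ≫ q) ≫ u₂) := by
          rw [Iso.hom_inv_id]; bicategory
      _ = 𝟙 (((z₂ ≫ (z₁ ≫ m)) ≫ q) ≫ u₂) ⊗≫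
            (z₂ ≫ (z₁ ≫ m)) ◁ ω.inv ⊗≫
            z₂ ◁ (z₁ ◁ κ.inv) ⊗≫
            z₂ ◁ (z₁ ◁ (g ◁ (ε₁.hom ▷ u₁ ≫ ε₁.inv ▷ u₁))) ⊗≫
            z₂ ◁ (z₁ ◁ κ.hom) ⊗≫
            (z₂ ≫ (z₁ ≫ m)) ◁ ω.hom ⊗≫
            𝟙 (((z₂ ≫ (z₁ ≫ m)) ≫ q) ≫ u₂) := by
          rw [L₁', L₂, hχt_inv, hχs]; bicategory
      _ = 𝟙 (((z₂ ≫ (z₁ ≫ m)) ≫ q) ≫ u₂) ⊗≫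
            (z₂ ≫ (z₁ ≫ m)) ◁ ω.inv ⊗≫
            z₂ ◁ (z₁ ◁ (κ.inv ≫ κ.hom)) ⊗≫
            (z₂ ≫ (z₁ ≫ m)) ◁ ω.hom ⊗≫
            𝟙 (((z₂ ≫ (z₁ ≫ m)) ≫ q) ≫ u₂) := by
          rw [hom_inv_whiskerRight]; bicategory
      _ = 𝟙 (((z₂ ≫ (z₁ ≫ m)) ≫ q) ≫ u₂) ⊗≫
            (z₂ ≫ (z₁ ≫ m)) ◁ (ω.inv ≫ ω.hom) ⊗≫
            𝟙 (((z₂ ≫ (z₁ ≫ m)) ≫ q) ≫ u₂) := by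
          rw [Iso.inv_hom_id]; bicategory
      _ = 𝟙 ((z₂ ≫ (z₁ ≫ m)) ≫ q) ▷ u₂ := by
          rw [Iso.inv_hom_id]; bicategory
  -- cancel the defects over covers
  obtain ⟨R₁, w₁, hw₁, hc1⟩ := cancel_right h1 h4 h5 u₁ hu₁ Ψ₁ (𝟙 _) C1
  obtain ⟨R₂, w₂, hw₂, hc2⟩ := cancel_right h1 h4 h5 u₂ hu₂ Ψ₂ (𝟙 _) C2
  obtain ⟨π₁, π₂, ι, hcW⟩ :
      ∃ (π₁ : (pb w₁ w₂ hw₁ hw₂).pt ⟶ R₁) (π₂ : (pb w₁ w₂ hw₁ hw₂).pt ⟶ R₂)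
        (ι : π₁ ≫ w₁ ≅ π₂ ≫ w₂), W (π₁ ≫ w₁) :=
    ⟨(pb w₁ w₂ hw₁ hw₂).fst, (pb w₁ w₂ hw₁ hw₂).snd, (pb w₁ w₂ hw₁ hw₂).iso,
      hpbc w₁ w₂ hw₁ hw₂⟩
  have k1 : (π₁ ≫ w₁) ◁ Ψ₁ = 𝟙 _ := by
    rw [Bicategory.comp_whiskerLeft, hc1]; simp
  have k2 : (π₁ ≫ w₁) ◁ Ψ₂ = 𝟙 _ := by
    have g₂ : (π₂ ≫ w₂) ◁ Ψ₂ = 𝟙 _ := by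
      rw [Bicategory.comp_whiskerLeft, hc2]; simp
    have ex := whisker_exchange ι.hom Ψ₂
    rw [g₂, Category.comp_id] at ex
    have hiso : IsIso (ι.hom ▷ ((z₂ ≫ (z₁ ≫ m)) ≫ q)) := by
      have : IsIso ι.hom := inferInstance
      infer_instance
    exact (cancel_mono (ι.hom ▷ ((z₂ ≫ (z₁ ≫ m)) ≫ q))).mp (by simpa using ex)
  -- conclude at the level of the cover
  have final : (π₁ ≫ w₁) ◁ ((z₂ ≫ (z₁ ≫ m)) ◁ δ₁) =
      (π₁ ≫ w₁) ◁ ((z₂ ≫ (z₁ ≫ m)) ◁ δ₂) := by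
    rw [MASTER]
    calc (π₁ ≫ w₁) ◁ (𝟙 ((z₂ ≫ (z₁ ≫ m)) ≫ (p ≫ f₁)) ⊗≫ Ψ₁ ▷ f₁ ⊗≫
          (z₂ ≫ (z₁ ≫ m)) ◁ δ₂ ⊗≫ Ψ₂ ▷ f₂ ⊗≫
          𝟙 ((z₂ ≫ (z₁ ≫ m)) ≫ (q ≫ f₂)))
        = 𝟙 ((π₁ ≫ w₁) ≫ ((z₂ ≫ (z₁ ≫ m)) ≫ (p ≫ f₁))) ⊗≫
            ((π₁ ≫ w₁) ◁ Ψ₁) ▷ f₁ ⊗≫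
            (π₁ ≫ w₁) ◁ ((z₂ ≫ (z₁ ≫ m)) ◁ δ₂) ⊗≫
            ((π₁ ≫ w₁) ◁ Ψ₂) ▷ f₂ ⊗≫
            𝟙 ((π₁ ≫ w₁) ≫ ((z₂ ≫ (z₁ ≫ m)) ≫ (q ≫ f₂))) := by bicategory
      _ = (π₁ ≫ w₁) ◁ ((z₂ ≫ (z₁ ≫ m)) ◁ δ₂) := by
          rw [k1, k2]; bicategory
  -- strip the covers
  have e1 : (z₂ ≫ (z₁ ≫ m)) ◁ δ₁ = (z₂ ≫ (z₁ ≫ m)) ◁ δ₂ :=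
    wl_cancel hcoff hcW final
  have e2 : (z₁ ≫ m) ◁ δ₁ = (z₁ ≫ m) ◁ δ₂ := by
    apply wl_cancel hcoff hz₂
    refine (cancel_mono (α_ z₂ (z₁ ≫ m) (q ≫ f₂)).inv).mp ?_
    refine (cancel_epi (α_ z₂ (z₁ ≫ m) (p ≫ f₁)).hom).mp ?_
    rw [← Bicategory.comp_whiskerLeft, ← Bicategory.comp_whiskerLeft]
    exact e1
  have e3 : m ◁ δ₁ = m ◁ δ₂ := by
    apply wl_cancel hcoff hz₁
    refine (cancel_mono (α_ z₁ m (q ≫ f₂)).inv).mp ?_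
    refine (cancel_epi (α_ z₁ m (p ≫ f₁)).hom).mp ?_
    rw [← Bicategory.comp_whiskerLeft, ← Bicategory.comp_whiskerLeft]
    exact e2
  exact wl_cancel hcoff hm e3


end Statement18Helpers

theorem statement18 {B : Type u} [Bicategory.{w, v} B] (W : WClass B)
    (h1 : W.WB1) (h2 : W.WB2) (h3 : W.WB3) (h4 : W.WB4) (h5 : W.WB5)
    (hcoff : ∀ ⦃x y : B⦄ (f : x ⟶ y), W f → CoFF f)
    (pb : ∀ {x y z : B} (u : x ⟶ z) (vm : y ⟶ z), W u → W vm → PseudoPullbackData u vm)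
    (hpbc : ∀ {x y z : B} (u : x ⟶ z) (vm : y ⟶ z) (hu : W u) (hv : W vm),
      W ((pb u vm hu hv).fst ≫ u))
    {a b c₁ c₂ : B} (u₁ : c₁ ⟶ a) (f₁ : c₁ ⟶ b) (u₂ : c₂ ⟶ a) (f₂ : c₂ ⟶ b)
    (hu₁ : W u₁) (hu₂ : W u₂) :
    (∀ {d : B} (v₁ : d ⟶ c₁) (v₂ : d ⟶ c₂), W (v₁ ≫ u₁) →
      ∀ (αc : v₁ ≫ u₁ ≅ v₂ ≫ u₂) (β : v₁ ≫ f₁ ⟶ v₂ ≫ f₂),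
        ∃ δ : (pb u₁ u₂ hu₁ hu₂).fst ≫ f₁ ⟶ (pb u₁ u₂ hu₁ hu₂).snd ≫ f₂,
          DiagEquiv W u₁ f₁ u₂ f₂ v₁ v₂ αc β
            (pb u₁ u₂ hu₁ hu₂).fst (pb u₁ u₂ hu₁ hu₂).snd (pb u₁ u₂ hu₁ hu₂).iso δ) ∧
    (∀ δ₁ δ₂ : (pb u₁ u₂ hu₁ hu₂).fst ≫ f₁ ⟶ (pb u₁ u₂ hu₁ hu₂).snd ≫ f₂,
      DiagEquiv W u₁ f₁ u₂ f₂
          (pb u₁ u₂ hu₁ hu₂).fst (pb u₁ u₂ hu₁ hu₂).snd (pb u₁ u₂ hu₁ hu₂).iso δ₁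
          (pb u₁ u₂ hu₁ hu₂).fst (pb u₁ u₂ hu₁ hu₂).snd (pb u₁ u₂ hu₁ hu₂).iso δ₂ ↔
        δ₁ = δ₂) := by
  constructor
  · intro d v₁ v₂ hv αc β
    exact Statement18Helpers.exists_rep h1 h2 h3 h4 h5 hcoff pb hpbc u₁ f₁ u₂ f₂
      hu₁ hu₂ (pb u₁ u₂ hu₁ hu₂) (hpbc u₁ u₂ hu₁ hu₂) v₁ v₂ hv αc β
  · intro δ₁ δ₂
    constructor
    · intro hD
      exact Statement18Helpers.unique_rep h1 h2 h3 h4 h5 hcoff pb hpbc u₁ f₁ u₂ f₂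
        hu₁ hu₂ (pb u₁ u₂ hu₁ hu₂) (hpbc u₁ u₂ hu₁ hu₂) δ₁ δ₂ hD
    · rintro rfl
      refine ⟨(pb u₁ u₂ hu₁ hu₂).pt, 𝟙 _, 𝟙 _, ?_, Iso.refl _, Iso.refl _, ?_, ?_⟩
      · exact h5 _ ((pb u₁ u₂ hu₁ hu₂).fst ≫ u₁) (hpbc u₁ u₂ hu₁ hu₂)
          ⟨whiskerRightIso (λ_ (pb u₁ u₂ hu₁ hu₂).fst) u₁⟩
      · simp only [Iso.refl_hom]; bicategory
      · simp only [Iso.refl_hom]; bicategory
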